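/- arXiv:1204.1707 — 2 statements merged into one kernel-verified Lean document; each statement's English description precedes it below -/
import Mathlib

section
/- Let f ∈ ℂ[[t²,t³]] be a power series whose constant term is zero and whose coefficient of t² is nonzero (so f = t²·(a + b₁t + b₂t² + ⋯) with a ≠ 0). Then the quotient ℂ[[t²,t³]]/(f) of ℂ[[t²,t³]] by the ideal generated by f is spanned as a ℂ-vector space by the residue classes of 1, t² and t³; in particular dim_ℂ ℂ[[t²,t³]]/(f) ≤ 3. -/
set_option synthInstance.maxHeartbeats 1000000
set_option maxHeartbeats 1000000

open PowerSeries

theorem cusp_div (f g : PowerSeries ℂ) (hf0 : coeff (R := ℂ) 0 f = 0) (hf1 : coeff (R := ℂ) 1 f = 0)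
    (hf2 : coeff (R := ℂ) 2 f ≠ 0) (hg : X ^ 4 ∣ g) :
    ∃ q : PowerSeries ℂ, coeff (R := ℂ) 1 q = 0 ∧ g = f * q := by
  obtain ⟨u, hu⟩ : (X : PowerSeries ℂ) ^ 2 ∣ f := by
    rw [X_pow_dvd_iff]
    intro m hm
    interval_cases m <;> assumption
  have hu0 : constantCoeff (R := ℂ) u ≠ 0 := by
    intro h
    apply hf2
    rw [hu]
    have := coeff_X_pow_mul u 2 0
    simpa [h] using this
  obtain ⟨U, hU⟩ := isUnit_iff_constantCoeff.2 (Ne.isUnit hu0)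
  obtain ⟨s, hs⟩ := hg
  refine ⟨X ^ 2 * ((↑U⁻¹ : PowerSeries ℂ) * s), ?_, ?_⟩
  · have h2 : (X : PowerSeries ℂ) ^ 2 ∣ X ^ 2 * ((↑U⁻¹ : PowerSeries ℂ) * s) := ⟨_, rfl⟩
    rw [X_pow_dvd_iff] at h2
    exact h2 1 (by norm_num)
  · rw [hs, hu]
    have : u * (↑U⁻¹ : PowerSeries ℂ) = 1 := by rw [← hU]; exact U.mul_inv
    calc X ^ 4 * s = X ^ 2 * (u * ↑U⁻¹) * (X ^ 2 * s) := by rw [this]; ring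
    _ = X ^ 2 * u * (X ^ 2 * (↑U⁻¹ * s)) := by ring

/-- The subalgebra `ℂ[[t²,t³]]` of `ℂ[[t]]`: power series whose coefficient of `t` vanishes. -/
noncomputable def cuspAlgebra : Subalgebra ℂ (PowerSeries ℂ) where
  carrier := {f | PowerSeries.coeff (R := ℂ) 1 f = 0}
  add_mem' := by
    intro a b ha hb
    simp only [Set.mem_setOf_eq, map_add] at *
    rw [ha, hb, add_zero]
  mul_mem' := by
    intro a b ha hb
    simp only [Set.mem_setOf_eq] at *
    rw [PowerSeries.coeff_mul, Finset.Nat.sum_antidiagonal_eq_sum_range_succ_mk]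
    simp [Finset.sum_range_succ, ha, hb]
  one_mem' := by simp [Set.mem_setOf_eq, PowerSeries.coeff_one]
  algebraMap_mem' := by
    intro c
    simp [Set.mem_setOf_eq, PowerSeries.algebraMap_apply, PowerSeries.coeff_C]

/-- `t² ∈ ℂ[[t²,t³]]`. -/
noncomputable def tSq : cuspAlgebra :=
  ⟨PowerSeries.X ^ 2, show PowerSeries.coeff (R := ℂ) 1 (PowerSeries.X ^ 2) = 0 by
    simp [PowerSeries.coeff_X_pow]⟩

/-- `t³ ∈ ℂ[[t²,t³]]`. -/
noncomputable def tCube : cuspAlgebra :=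
  ⟨PowerSeries.X ^ 3, show PowerSeries.coeff (R := ℂ) 1 (PowerSeries.X ^ 3) = 0 by
    simp [PowerSeries.coeff_X_pow]⟩

/-- Let `f ∈ ℂ[[t²,t³]]` have zero constant term and nonzero
coefficient of `t²`.  Then `ℂ[[t²,t³]]/(f)` is spanned as a `ℂ`-vector space by the
residue classes of `1`, `t²` and `t³`; in particular its `ℂ`-dimension is at most
`3`. -/
theorem quotient_spanned_by_one_tSq_tCube
    (f : cuspAlgebra)
    (h0 : PowerSeries.coeff (R := ℂ) 0 (f : PowerSeries ℂ) = 0)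
    (h2 : PowerSeries.coeff (R := ℂ) 2 (f : PowerSeries ℂ) ≠ 0) :
    Submodule.span ℂ
        ({1, Ideal.Quotient.mk (Ideal.span {f}) tSq,
          Ideal.Quotient.mk (Ideal.span {f}) tCube} :
          Set (cuspAlgebra ⧸ Ideal.span {f})) = ⊤ ∧
      Module.rank ℂ (cuspAlgebra ⧸ Ideal.span {f}) ≤ 3 := by
  set I := Ideal.span ({f} : Set cuspAlgebra) with hI
  have hspan : Submodule.span ℂ
      ({1, Ideal.Quotient.mk I tSq, Ideal.Quotient.mk I tCube} :
        Set (cuspAlgebra ⧸ I)) = ⊤ := by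
    rw [eq_top_iff]
    rintro x -
    obtain ⟨g, rfl⟩ := Ideal.Quotient.mk_surjective x
    set a := coeff (R := ℂ) 0 (g : PowerSeries ℂ) with ha
    set b := coeff (R := ℂ) 2 (g : PowerSeries ℂ) with hb
    set c := coeff (R := ℂ) 3 (g : PowerSeries ℂ) with hc
    have hg1 : coeff (R := ℂ) 1 (g : PowerSeries ℂ) = 0 := g.2
    have hdvd : (X : PowerSeries ℂ) ^ 4 ∣
        ((g : PowerSeries ℂ) - (C (R := ℂ) a + C (R := ℂ) b * X ^ 2 + C (R := ℂ) c * X ^ 3)) := by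
      rw [X_pow_dvd_iff]
      intro m hm
      interval_cases m <;>
        simp [ha, hb, hc, coeff_C, coeff_X_pow, hg1]
    obtain ⟨q, hq1, hq⟩ := cusp_div (f : PowerSeries ℂ) _ h0 f.2 h2 hdvd
    have hgeq : g = a • 1 + b • tSq + c • tCube + f * ⟨q, hq1⟩ := by
      apply Subtype.ext
      show (g : PowerSeries ℂ) = a • (1 : PowerSeries ℂ) + b • (X ^ 2) + c • (X ^ 3)
        + (f : PowerSeries ℂ) * q
      simp only [smul_eq_C_mul]
      linear_combination hq
    rw [hgeq, map_add, map_add, map_add]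
    have hfq : Ideal.Quotient.mk I (f * ⟨q, hq1⟩) = 0 := by
      rw [Ideal.Quotient.eq_zero_iff_mem]
      exact Ideal.mul_mem_right _ _ (Ideal.subset_span rfl)
    rw [hfq, add_zero]
    have hsm : ∀ (z : ℂ) (y : cuspAlgebra),
        Ideal.Quotient.mk I (z • y) = z • Ideal.Quotient.mk I y := by
      intro z y
      exact map_smul (Ideal.Quotient.mkₐ ℂ I) z y
    rw [hsm, hsm, hsm, map_one]
    refine Submodule.add_mem _ (Submodule.add_mem _ ?_ ?_) ?_
    · exact Submodule.smul_mem _ _ (Submodule.subset_span (by simp))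
    · exact Submodule.smul_mem _ _ (Submodule.subset_span (by simp))
    · exact Submodule.smul_mem _ _ (Submodule.subset_span (by simp))
  refine ⟨hspan, ?_⟩
  have hr := rank_span_le (R := ℂ)
    ({1, Ideal.Quotient.mk I tSq, Ideal.Quotient.mk I tCube} : Set (cuspAlgebra ⧸ I))
  rw [hspan, rank_top] at hr
  refine hr.trans ?_
  calc (Cardinal.mk ({1, Ideal.Quotient.mk I tSq, Ideal.Quotient.mk I tCube} :
      Set (cuspAlgebra ⧸ I)))
      ≤ Cardinal.mk ({Ideal.Quotient.mk I tSq, Ideal.Quotient.mk I tCube} :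
        Set (cuspAlgebra ⧸ I)) + 1 := Cardinal.mk_insert_le
    _ ≤ (Cardinal.mk ({Ideal.Quotient.mk I tCube} : Set (cuspAlgebra ⧸ I)) + 1) + 1 := by
        exact add_le_add_left Cardinal.mk_insert_le 1
    _ = 3 := by rw [Cardinal.mk_singleton]; norm_num
end

section
/- Let f ∈ ℂ[[t²,t³]] be a power series whose coefficients of t⁰ and t² are zero and whose coefficient of t³ is nonzero (so f = t³·(a + c₁t + c₂t² + ⋯) with a ≠ 0). Then the quotient ℂ[[t²,t³]]/(f) of ℂ[[t²,t³]] by the ideal generated by f is spanned as a ℂ-vector space by the residue classes of 1, t² and t⁴; in particular dim_ℂ ℂ[[t²,t³]]/(f) ≤ 3. -/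
set_option synthInstance.maxHeartbeats 1000000
set_option maxHeartbeats 1000000

/-- `t⁴ ∈ ℂ[[t²,t³]]`. -/
noncomputable def tFour : cuspAlgebra :=
  ⟨PowerSeries.X ^ 4, show PowerSeries.coeff (R := ℂ) 1 (PowerSeries.X ^ 4) = 0 by
    simp [PowerSeries.coeff_X_pow]⟩

/-- Let `f ∈ ℂ[[t²,t³]]` have zero coefficients of `t⁰` and `t²` and
nonzero coefficient of `t³`.  Then `ℂ[[t²,t³]]/(f)` is spanned as a `ℂ`-vector space
by the residue classes of `1`, `t²` and `t⁴`; in particular its `ℂ`-dimension is at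
most `3`. -/
theorem quotient_spanned_by_one_tSq_tFour
    (f : cuspAlgebra)
    (h0 : PowerSeries.coeff (R := ℂ) 0 (f : PowerSeries ℂ) = 0)
    (h2 : PowerSeries.coeff (R := ℂ) 2 (f : PowerSeries ℂ) = 0)
    (h3 : PowerSeries.coeff (R := ℂ) 3 (f : PowerSeries ℂ) ≠ 0) :
    Submodule.span ℂ
        ({1, Ideal.Quotient.mk (Ideal.span {f}) tSq,
          Ideal.Quotient.mk (Ideal.span {f}) tFour} :
          Set (cuspAlgebra ⧸ Ideal.span {f})) = ⊤ ∧
      Module.rank ℂ (cuspAlgebra ⧸ Ideal.span {f}) ≤ 3 := by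
  classical
  set I : Ideal cuspAlgebra := Ideal.span {f} with hI
  have hf1 : PowerSeries.coeff (R := ℂ) 1 (f : PowerSeries ℂ) = 0 := f.2
  -- factor f = X^3 * u
  obtain ⟨u, hu⟩ : (PowerSeries.X : PowerSeries ℂ) ^ 3 ∣ (f : PowerSeries ℂ) := by
    rw [PowerSeries.X_pow_dvd_iff]
    intro m hm
    interval_cases m <;> assumption
  have hu0 : PowerSeries.constantCoeff (R := ℂ) u ≠ 0 := by
    have h30 : PowerSeries.coeff (R := ℂ) 3 (f : PowerSeries ℂ) = PowerSeries.coeff (R := ℂ) 0 u := by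
      rw [hu]
      simpa using PowerSeries.coeff_X_pow_mul u 3 0
    intro h
    exact h3 (by rw [h30, ← PowerSeries.coeff_zero_eq_constantCoeff_apply] at *; exact h ▸ h30)
  set v : PowerSeries ℂ := u⁻¹ with hv
  have huv : u * v = 1 := PowerSeries.mul_inv_cancel u hu0
  have hv0 : PowerSeries.coeff (R := ℂ) 0 v ≠ 0 := by
    intro h
    have := congrArg (PowerSeries.coeff (R := ℂ) 0) huv
    rw [PowerSeries.coeff_mul, Finset.Nat.sum_antidiagonal_eq_sum_range_succ_mk] at this
    simp [Finset.sum_range_succ, h] at this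
  -- main claim: every g is congruent to a combination of 1, t², t⁴
  have key : ∀ g : cuspAlgebra, ∃ a b c : ℂ,
      g - (a • 1 + b • tSq + c • tFour) ∈ I := by
    intro g
    set G : PowerSeries ℂ := (g : PowerSeries ℂ) with hG
    have hg1 : PowerSeries.coeff (R := ℂ) 1 G = 0 := g.2
    set a : ℂ := PowerSeries.coeff (R := ℂ) 0 G with ha
    set b : ℂ := PowerSeries.coeff (R := ℂ) 2 G with hb
    set c : ℂ := PowerSeries.coeff (R := ℂ) 4 G
        + (PowerSeries.coeff (R := ℂ) 1 v / PowerSeries.coeff (R := ℂ) 0 v) * PowerSeries.coeff (R := ℂ) 3 G with hc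
    set R : PowerSeries ℂ := G - (PowerSeries.C (R := ℂ) a + PowerSeries.C (R := ℂ) b * PowerSeries.X ^ 2
        + PowerSeries.C (R := ℂ) c * PowerSeries.X ^ 4) with hR
    obtain ⟨k, hk⟩ : (PowerSeries.X : PowerSeries ℂ) ^ 3 ∣ R := by
      rw [PowerSeries.X_pow_dvd_iff]
      intro m hm
      interval_cases m <;>
        simp [hR, PowerSeries.coeff_X_pow, PowerSeries.coeff_C, ha, hb, hg1]
    have hcoeffk : ∀ m : ℕ, PowerSeries.coeff (R := ℂ) m k = PowerSeries.coeff (R := ℂ) (m + 3) R := by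
      intro m
      rw [hk, PowerSeries.coeff_X_pow_mul]
    have hk0 : PowerSeries.coeff (R := ℂ) 0 k = PowerSeries.coeff (R := ℂ) 3 G := by
      rw [hcoeffk]
      simp [hR, PowerSeries.coeff_X_pow, PowerSeries.coeff_C]
    have hk1 : PowerSeries.coeff (R := ℂ) 1 k = PowerSeries.coeff (R := ℂ) 4 G - c := by
      rw [hcoeffk]
      simp [hR, PowerSeries.coeff_X_pow, PowerSeries.coeff_C]
    have h1' : PowerSeries.coeff (R := ℂ) 1 (v * k) = 0 := by
      rw [PowerSeries.coeff_mul, Finset.Nat.sum_antidiagonal_eq_sum_range_succ_mk]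
      simp only [Finset.sum_range_succ, Finset.sum_range_zero, zero_add]
      have hv0' : PowerSeries.constantCoeff (R := ℂ) v ≠ 0 := by
        rwa [← PowerSeries.coeff_zero_eq_constantCoeff_apply]
      rw [hk0, hk1, hc]
      simp only [PowerSeries.coeff_zero_eq_constantCoeff_apply]
      field_simp
      ring
    refine ⟨a, b, c, ?_⟩
    rw [hI, Ideal.mem_span_singleton]
    refine ⟨⟨v * k, h1'⟩, Subtype.ext ?_⟩
    show G - ((a • (1 : cuspAlgebra) + b • tSq + c • tFour : cuspAlgebra) : PowerSeries ℂ)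
        = (f : PowerSeries ℂ) * (v * k)
    have hcoe : ((a • (1 : cuspAlgebra) + b • tSq + c • tFour : cuspAlgebra) : PowerSeries ℂ)
        = PowerSeries.C (R := ℂ) a + PowerSeries.C (R := ℂ) b * PowerSeries.X ^ 2
          + PowerSeries.C (R := ℂ) c * PowerSeries.X ^ 4 := by
      push_cast [tSq, tFour]
      rw [PowerSeries.smul_eq_C_mul, PowerSeries.smul_eq_C_mul, PowerSeries.smul_eq_C_mul,
        mul_one]
    rw [hcoe]
    calc G - (PowerSeries.C (R := ℂ) a + PowerSeries.C (R := ℂ) b * PowerSeries.X ^ 2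
          + PowerSeries.C (R := ℂ) c * PowerSeries.X ^ 4) = R := by rw [hR]
      _ = PowerSeries.X ^ 3 * k := hk
      _ = (PowerSeries.X ^ 3 * k) * (u * v) := by rw [huv, mul_one]
      _ = (f : PowerSeries ℂ) * (v * k) := by rw [hu]; ring
  -- spanning
  have hspan : Submodule.span ℂ
      ({1, Ideal.Quotient.mk I tSq, Ideal.Quotient.mk I tFour} :
        Set (cuspAlgebra ⧸ I)) = ⊤ := by
    rw [eq_top_iff]
    rintro x -
    obtain ⟨g, rfl⟩ := Ideal.Quotient.mk_surjective x
    obtain ⟨a, b, c, hm⟩ := key g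
    have heq : Ideal.Quotient.mk I g
        = Ideal.Quotient.mk I (a • 1 + b • tSq + c • tFour) :=
      Ideal.Quotient.eq.mpr hm
    have heq2 : Ideal.Quotient.mk I (a • 1 + b • tSq + c • tFour)
        = a • (1 : cuspAlgebra ⧸ I) + b • Ideal.Quotient.mk I tSq
          + c • Ideal.Quotient.mk I tFour := by
      rw [← Ideal.Quotient.mkₐ_eq_mk ℂ I]
      simp [map_add, map_smul]
    rw [heq, heq2]
    refine add_mem (add_mem ?_ ?_) ?_ <;> refine Submodule.smul_mem _ _ (Submodule.subset_span ?_)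
    · exact Set.mem_insert _ _
    · exact Set.mem_insert_of_mem _ (Set.mem_insert _ _)
    · exact Set.mem_insert_of_mem _ (Set.mem_insert_of_mem _ rfl)
  refine ⟨hspan, ?_⟩
  have hs := rank_span_le (R := ℂ)
    ({1, Ideal.Quotient.mk I tSq, Ideal.Quotient.mk I tFour} : Set (cuspAlgebra ⧸ I))
  rw [hspan, rank_top] at hs
  refine hs.trans ?_
  calc (Cardinal.mk ({1, Ideal.Quotient.mk I tSq, Ideal.Quotient.mk I tFour}
        : Set (cuspAlgebra ⧸ I)))
      ≤ Cardinal.mk ({Ideal.Quotient.mk I tSq, Ideal.Quotient.mk I tFour}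
        : Set (cuspAlgebra ⧸ I)) + 1 := Cardinal.mk_insert_le
    _ ≤ (Cardinal.mk ({Ideal.Quotient.mk I tFour} : Set (cuspAlgebra ⧸ I)) + 1) + 1 :=
        add_le_add_left Cardinal.mk_insert_le 1
    _ = 3 := by rw [Cardinal.mk_singleton]; norm_num
end
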